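/- Let μ ≤ λ be regular cardinals with λ μ-closed. In any μ-directed poset I, every subset of cardinality strictly less than λ is contained in a μ-directed subset of I of cardinality strictly less than λ. -/

import Mathlib

open Cardinal Ordinal Set

universe u

/-- One closure step: add `s`, keep `x`, and add `f u` for every small subset `u` of `x`. -/
noncomputable def hullStep (μ : Cardinal.{u}) {I : Type u} (f : Set I → I) (s : Set I)
    (x : Set I) : Set I :=
  s ∪ x ∪ f '' {u : Set I | u ⊆ x ∧ #u < μ}

/-- The `typein` function on `α.ToType`, with the well-order instance made explicit. -/
noncomputable def otypein (α : Ordinal.{u}) (b : α.ToType) : Ordinal.{u} :=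
  @Ordinal.typein α.ToType (· < ·) isWellOrder_lt b

theorem otypein_lt_self (α : Ordinal.{u}) (b : α.ToType) : otypein α b < α :=
  Ordinal.typein_lt_self b

/-- The `enum` function on `α.ToType`, with the well-order instance made explicit. -/
noncomputable def oenum (α : Ordinal.{u}) (β : Ordinal.{u}) (h : β < α) : α.ToType :=
  @Ordinal.enum α.ToType (· < ·) isWellOrder_lt
    ⟨β, by rwa [@Ordinal.type_toType α]⟩

theorem otypein_oenum (α : Ordinal.{u}) (β : Ordinal.{u}) (h : β < α) :
    otypein α (oenum α β h) = β :=
  @Ordinal.typein_enum α.ToType (· < ·) isWellOrder_lt β _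

theorem card_otypein (α : Ordinal.{u}) (b : α.ToType) :
    (otypein α b).card = #{a : α.ToType // a < b} :=
  @Ordinal.card_typein α.ToType (· < ·) isWellOrder_lt b

/-- Transfinite iteration of `hullStep`. -/
noncomputable def hullIter (μ : Cardinal.{u}) {I : Type u} (f : Set I → I) (s : Set I)
    (α : Ordinal.{u}) : Set I :=
  ⋃ b : α.ToType, hullStep μ f s (hullIter μ f s (otypein α b))
termination_by α
decreasing_by exact otypein_lt_self α b

theorem mem_hullIter (μ : Cardinal.{u}) {I : Type u} (f : Set I → I) (s : Set I)
    {α : Ordinal.{u}} {x : I} :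
    x ∈ hullIter μ f s α ↔ ∃ β < α, x ∈ hullStep μ f s (hullIter μ f s β) := by
  rw [hullIter]
  constructor
  · intro hx
    obtain ⟨b, hb⟩ := Set.mem_iUnion.1 hx
    exact ⟨_, otypein_lt_self α b, hb⟩
  · rintro ⟨β, hβ, hx⟩
    refine Set.mem_iUnion.2 ⟨oenum α β hβ, ?_⟩
    rwa [otypein_oenum]

theorem hullIter_mono (μ : Cardinal.{u}) {I : Type u} (f : Set I → I) (s : Set I)
    {β α : Ordinal.{u}} (h : β ≤ α) : hullIter μ f s β ⊆ hullIter μ f s α := by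
  intro x hx
  rw [mem_hullIter] at hx ⊢
  obtain ⟨γ, hγ, hx⟩ := hx
  exact ⟨γ, hγ.trans_le h, hx⟩

theorem hullStep_subset_hullIter (μ : Cardinal.{u}) {I : Type u} (f : Set I → I) (s : Set I)
    {β α : Ordinal.{u}} (h : β < α) :
    hullStep μ f s (hullIter μ f s β) ⊆ hullIter μ f s α := fun _ hx =>
  (mem_hullIter μ f s).2 ⟨β, h, hx⟩

/-- Counting small subsets of a set. -/
theorem mk_small_subsets_le {α : Type u} (x : Set α) {μ : Cardinal.{u}} (hμ : ℵ₀ ≤ μ) :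
    #{u : Set α // u ⊆ x ∧ #u < μ} ≤ μ * (#x ^< μ) + 1 := by
  set D := (μ.ord).ToType with hD
  set B : D → Type u := fun b => {a : D // a < b} with hB
  have hcardB : ∀ b : D, #(B b) < μ := by
    intro b
    have h1 : #(B b) = (otypein μ.ord b).card := (card_otypein μ.ord b).symm
    rw [h1, ← Cardinal.lt_ord]
    exact otypein_lt_self μ.ord b
  -- surjection onto the small subsets
  have h0μ : #(∅ : Set α) < μ := by
    rw [Cardinal.mk_emptyCollection]
    exact aleph0_pos.trans_le hμ
  have hsub : ∀ p : Σ b : D, (B b → x), (Set.range fun a => (p.2 a : α)) ⊆ x := by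
    rintro p y ⟨a, rfl⟩; exact (p.2 a).2
  have hsmall : ∀ p : Σ b : D, (B b → x), #(Set.range fun a => (p.2 a : α)) < μ :=
    fun p => (Cardinal.mk_range_le).trans_lt (hcardB p.1)
  set Φ : (Σ b : D, (B b → x)) ⊕ PUnit.{u+1} → {u : Set α // u ⊆ x ∧ #u < μ} :=
    Sum.elim (fun p => ⟨Set.range fun a => (p.2 a : α), hsub p, hsmall p⟩)
      (fun _ => ⟨∅, Set.empty_subset x, h0μ⟩) with hΦ
  have hsurj : Function.Surjective Φ := by
    rintro ⟨u, hu, hcu⟩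
    rcases eq_or_ne u ∅ with rfl | hne
    · exact ⟨Sum.inr PUnit.unit, by simp [hΦ]⟩
    · have h1 : (#u).ord < μ.ord := Cardinal.ord_lt_ord.2 hcu
      set b : D := oenum μ.ord (#u).ord h1 with hb
      have hcb : #(B b) = #u := by
        have h2 : #(B b) = (otypein μ.ord b).card := (card_otypein μ.ord b).symm
        rw [h2, hb, otypein_oenum, Cardinal.card_ord]
      obtain ⟨e⟩ := Cardinal.eq.1 hcb
      refine ⟨Sum.inl ⟨b, fun a => ⟨(e a : α), hu (e a).2⟩⟩, ?_⟩
      apply Subtype.ext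
      simp only [hΦ, Sum.elim_inl]
      ext y
      constructor
      · rintro ⟨a, rfl⟩; exact (e a).2
      · intro hy
        exact ⟨e.symm ⟨y, hy⟩, by simp⟩
  calc #{u : Set α // u ⊆ x ∧ #u < μ} ≤ #((Σ b : D, (B b → x)) ⊕ PUnit.{u+1}) :=
        Cardinal.mk_le_of_surjective hsurj
    _ = #(Σ b : D, (B b → x)) + 1 := by simp [Cardinal.mk_sum]
    _ ≤ μ * (#x ^< μ) + 1 := by
        gcongr
        calc #(Σ b : D, (B b → x)) = Cardinal.sum fun b : D => #(B b → x) := Cardinal.mk_sigma _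
          _ ≤ Cardinal.sum fun _ : D => #x ^< μ := by
              refine Cardinal.sum_le_sum _ _ fun b => ?_
              rw [← Cardinal.power_def]
              exact Cardinal.le_powerlt _ (hcardB b)
          _ = #D * (#x ^< μ) := by rw [Cardinal.sum_const']
          _ = μ * (#x ^< μ) := by rw [hD, Cardinal.mk_toType, Cardinal.card_ord]

/-- Let `μ ≤ lam` be regular cardinals with `lam` `μ`-closed. In any `μ`-directed poset `I`,
every subset of cardinality strictly less than `lam` is contained in a `μ`-directed subset
of `I` of cardinality strictly less than `lam`. -/
theorem stmt7 (μ lam : Cardinal.{u}) (hμ : μ.IsRegular) (hlam : lam.IsRegular)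
    (hle : μ ≤ lam) (hclosed : ∀ θ : Cardinal.{u}, θ < lam → θ ^< μ < lam)
    (I : Type u) [PartialOrder I]
    (hdir : ∀ s : Set I, #s < μ → ∃ ub : I, ∀ i ∈ s, i ≤ ub)
    (s : Set I) (hs : #s < lam) :
    ∃ t : Set I, s ⊆ t ∧ #t < lam ∧
      ∀ u : Set I, u ⊆ t → #u < μ → ∃ ub ∈ t, ∀ i ∈ u, i ≤ ub := by
  -- first: μ < lam
  have hμa : ℵ₀ ≤ μ := hμ.aleph0_le
  have hμlam : μ < lam := by
    have h2 : (2 : Cardinal.{u}) ^< μ < lam :=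
      hclosed 2 ((Cardinal.nat_lt_aleph0 2).trans_le hlam.aleph0_le)
    refine lt_of_le_of_lt ?_ h2
    by_contra h
    push_neg at h
    have h3 : (2 : Cardinal.{u}) ^ ((2 : Cardinal.{u}) ^< μ) ≤ (2 : Cardinal.{u}) ^< μ :=
      Cardinal.le_powerlt 2 h
    exact absurd h3 (not_le.2 (Cardinal.cantor _))
  -- choice of upper bounds
  have hne : Nonempty I := by
    obtain ⟨e, -⟩ := hdir ∅ (by simpa using aleph0_pos.trans_le hμa)
    exact ⟨e⟩
  obtain ⟨f, hf⟩ : ∃ f : Set I → I, ∀ u : Set I, #u < μ → ∀ i ∈ u, i ≤ f u := by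
    refine ⟨fun u => if h : #u < μ then (hdir u h).choose else Classical.arbitrary I,
      fun u h => ?_⟩
    simp only [dif_pos h]
    exact (hdir u h).choose_spec
  -- cardinality bound for one step
  have hstep : ∀ x : Set I, #x < lam → #(hullStep μ f s x) < lam := by
    intro x hx
    have him : #(f '' {u : Set I | u ⊆ x ∧ #u < μ}) < lam := by
      refine lt_of_le_of_lt Cardinal.mk_image_le ?_
      refine lt_of_le_of_lt (mk_small_subsets_le (α := I) x hμa) ?_
      refine Cardinal.add_lt_of_lt hlam.aleph0_le
        (Cardinal.mul_lt_of_lt hlam.aleph0_le hμlam (hclosed _ hx)) ?_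
      exact Cardinal.one_lt_aleph0.trans_le hlam.aleph0_le
    refine lt_of_le_of_lt (Cardinal.mk_union_le _ _)
      (Cardinal.add_lt_of_lt hlam.aleph0_le ?_ him)
    exact lt_of_le_of_lt (Cardinal.mk_union_le _ _)
      (Cardinal.add_lt_of_lt hlam.aleph0_le hs hx)
  -- cardinality bound for the iteration
  have hcard : ∀ α : Ordinal.{u}, α ≤ μ.ord → #(hullIter μ f s α) < lam := by
    intro α
    induction α using Ordinal.induction with
    | h α IH =>
      intro hα
      rw [hullIter]
      refine lt_of_le_of_lt Cardinal.mk_iUnion_le_sum_mk ?_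
      refine Cardinal.sum_lt_of_isRegular hlam ?_ fun b => ?_
      · rw [Cardinal.mk_toType]
        refine lt_of_le_of_lt ?_ hμlam
        simpa using Ordinal.card_le_card hα
      · have hlt : otypein α b < α := otypein_lt_self α b
        exact hstep _ (IH _ hlt (hlt.le.trans hα))
  set t : Set I := hullIter μ f s μ.ord with ht
  have hord0 : (0 : Ordinal.{u}) < μ.ord := by
    rw [Cardinal.lt_ord]
    simpa using aleph0_pos.trans_le hμa
  have hlim : Order.IsSuccLimit (μ.ord) := Cardinal.isSuccLimit_ord hμa
  refine ⟨t, ?_, hcard _ le_rfl, ?_⟩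
  · -- s ⊆ t
    intro x hx
    exact hullStep_subset_hullIter μ f s hord0 (Set.mem_union_left _ (Set.mem_union_left _ hx))
  · intro u hu hcu
    have hmem : ∀ i : u, ∃ β : Ordinal.{u}, β < μ.ord ∧ (i : I) ∈ hullIter μ f s β := by
      intro i
      obtain ⟨β, hβ, hib⟩ := (mem_hullIter μ f s).1 (hu i.2)
      exact ⟨β + 1, hlim.succ_lt hβ, hullStep_subset_hullIter μ f s (lt_add_one β) hib⟩
    choose o ho1 ho2 using hmem
    have hδlt : (⨆ i : u, o i) < μ.ord := by
      refine Ordinal.iSup_lt_ord ?_ ho1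
      rwa [hμ.cof_eq]
    have huδ : u ⊆ hullIter μ f s (⨆ i : u, o i) := by
      intro i hi
      exact hullIter_mono μ f s (Ordinal.le_iSup o ⟨i, hi⟩) (ho2 ⟨i, hi⟩)
    refine ⟨f u, ?_, hf u hcu⟩
    have hfu : f u ∈ hullStep μ f s (hullIter μ f s (⨆ i : u, o i)) :=
      Set.mem_union_right _ ⟨u, ⟨huδ, hcu⟩, rfl⟩
    exact hullStep_subset_hullIter μ f s hδlt hfu
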